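/- arXiv:1001.4283 — 2 statements merged into one kernel-verified Lean document; each statement's English description precedes it below -/
import Mathlib

section
/- The map Φ̂^C: P^C_{2n} → Q_n^C is monotone: if π ≤ λ in dominance order on P^C_{2n}, then Φ̂^C(π) ≤ Φ̂^C(λ) in the interleaved dominance order on bipartitions. -/
open Finset

/-- Partial sum of the first `k` terms of a sequence of naturals. -/
def psum (π : ℕ → ℕ) (k : ℕ) : ℕ := ∑ i ∈ Finset.range k, π i

/-- A composition of `n`: almost all terms zero, summing to `n`. -/
def IsComposition (n : ℕ) (π : ℕ → ℕ) : Prop :=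
  ∃ N, (∀ i, N ≤ i → π i = 0) ∧ psum π N = n

/-- Dominance order: `l` dominates `π`. -/
def Dominates (l π : ℕ → ℕ) : Prop := ∀ k, psum π k ≤ psum l k

/-- A partition: weakly decreasing sequence. -/
def IsPartition (π : ℕ → ℕ) : Prop := ∀ i, π (i + 1) ≤ π i

/-- A quasi-partition: `π i ≥ π (i+2)` for all `i`. -/
def IsQuasiPartition (π : ℕ → ℕ) : Prop := ∀ i, π (i + 2) ≤ π i

/-- Interleaving of two sequences: `(ρ₁, σ₁, ρ₂, σ₂, …)` (0-indexed). -/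
def interleave (ρ σ : ℕ → ℕ) (i : ℕ) : ℕ :=
  if i % 2 = 0 then ρ (i / 2) else σ (i / 2)

/-- A bipartition of `n`: a pair of partitions whose interleaving sums to `n`. -/
def IsBipartition (n : ℕ) (ρ σ : ℕ → ℕ) : Prop :=
  IsPartition ρ ∧ IsPartition σ ∧ IsComposition n (interleave ρ σ)

/-- Interleaved dominance order on bipartitions: `(ρ;σ) ≤ (μ;ν)`. -/
def BiLE (ρ σ μ ν : ℕ → ℕ) : Prop :=
  Dominates (interleave μ ν) (interleave ρ σ)

/-- The map `Φ^C` on sequences: replace a consecutive pair `2s < 2t`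
by `s+t, s+t` (pointwise description; replacements never overlap for
quasi-partitions). -/
def phiC (π : ℕ → ℕ) : ℕ → ℕ
  | 0 => if π 0 < π 1 then (π 0 + π 1) / 2 else π 0
  | (j + 1) =>
      if π (j + 1) < π (j + 2) then (π (j + 1) + π (j + 2)) / 2
      else if π j < π (j + 1) then (π j + π (j + 1)) / 2
      else π (j + 1)

/-- `Φ^C` of a bipartition: apply `phiC` to the doubled interleaving. -/
def PhiC (ρ σ : ℕ → ℕ) : ℕ → ℕ := phiC (fun i => 2 * interleave ρ σ i)

/-- Membership in `P^C_{2n}`: partition of `2n` with every odd part of even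
multiplicity. -/
def IsPC (n : ℕ) (l : ℕ → ℕ) : Prop :=
  IsPartition l ∧ IsComposition (2 * n) l ∧
    ∀ a : ℕ, Odd a → Even ({i | l i = a}.ncard)

/-- C-distinguished: `μ i ≥ ν i - 1` and `ν i ≥ μ (i+1) - 1`. -/
def QC (μ ν : ℕ → ℕ) : Prop :=
  ∀ i, ν i ≤ μ i + 1 ∧ μ (i + 1) ≤ ν i + 1

/-- B-distinguished: `μ i ≥ ν i - 2` and `ν i ≥ μ (i+1)`. -/
def QB (μ ν : ℕ → ℕ) : Prop :=
  ∀ i, ν i ≤ μ i + 2 ∧ μ (i + 1) ≤ ν i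

/-- Special: `μ i ≥ ν i - 1` and `ν i ≥ μ (i+1)`. -/
def QS (μ ν : ℕ → ℕ) : Prop :=
  ∀ i, ν i ≤ μ i + 1 ∧ μ (i + 1) ≤ ν i

/-- The condition defining `Q_n^{B,2}`: `μ i ≥ ν i - 2`. -/
def QB2 (μ ν : ℕ → ℕ) : Prop := ∀ i, ν i ≤ μ i + 2

/-- For an antitone sequence, the starting index of the run of equal values
containing index `i`. -/
noncomputable def runStart (l : ℕ → ℕ) (i : ℕ) : ℕ := {j | l i < l j}.ncard

/-- The map `Φ̂^C`, pointwise: halve even parts; replace an (even-length)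
maximal run of an odd part `2k+1` with `k, k+1, k, k+1, …`. -/
noncomputable def hphiC (l : ℕ → ℕ) (i : ℕ) : ℕ :=
  if Even (l i) then l i / 2
  else if Even (i - runStart l i) then l i / 2 else l i / 2 + 1

/-- Partial sums of an integer sequence. -/
def zsum (π : ℕ → ℤ) (k : ℕ) : ℤ := ∑ i ∈ Finset.range k, π i

/-- Dominance order on integer sequences. -/
def ZDominates (l π : ℕ → ℤ) : Prop := ∀ k, zsum π k ≤ zsum l k

/-- The interleaved integer sequence `(2ρ₁+1, 2σ₁−1, 2ρ₂+1, 2σ₂−1, …)`. -/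
def interB (ρ σ : ℕ → ℕ) (i : ℕ) : ℤ :=
  if i % 2 = 0 then 2 * (ρ (i / 2) : ℤ) + 1 else 2 * (σ (i / 2) : ℤ) - 1

/-- The map `Φ^B` on integer sequences: replace a consecutive pair `s < t`
by `(s+t)/2, (s+t)/2` (pointwise description). -/
def phiB (π : ℕ → ℤ) : ℕ → ℤ
  | 0 => if π 0 < π 1 then (π 0 + π 1) / 2 else π 0
  | (j + 1) =>
      if π (j + 1) < π (j + 2) then (π (j + 1) + π (j + 2)) / 2
      else if π j < π (j + 1) then (π j + π (j + 1)) / 2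
      else π (j + 1)

/-- `Φ^B` of a bipartition. -/
def PhiB (ρ σ : ℕ → ℕ) : ℕ → ℤ := phiB (interB ρ σ)

/-- Membership in `P^B_{2n+1}` for an integer sequence: nonnegative, weakly
decreasing, summing to `2n+1`, with every (positive) even part of even
multiplicity. -/
def IsPB (n : ℕ) (l : ℕ → ℤ) : Prop :=
  (∀ i, 0 ≤ l i) ∧ (∀ i, l (i + 1) ≤ l i) ∧
  (∃ N, (∀ i, N ≤ i → l i = 0) ∧ zsum l N = 2 * n + 1) ∧
  ∀ a : ℤ, 0 < a → Even a → Even ({i | l i = a}.ncard)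

/-- Membership in `P^B_{2n+1}` for a natural-number partition. -/
def IsPBN (n : ℕ) (l : ℕ → ℕ) : Prop :=
  IsPartition l ∧ IsComposition (2 * n + 1) l ∧
    ∀ a : ℕ, 0 < a → Even a → Even ({i | l i = a}.ncard)

/-- The map `Φ̂^B`, pointwise (0-indexed, so the paper's index `i` is `j+1`):
an odd part `λ_i` becomes `(λ_i + (−1)^i)/2`; a maximal run of an even part
`2k` starting at (0-indexed) position `s` becomes `k, k, …` if `s` is odd
(paper's `i` even) and `k−1, k+1, k−1, k+1, …` if `s` is even (paper's `i`
odd). -/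
noncomputable def hphiB (l : ℕ → ℕ) (j : ℕ) : ℕ :=
  if Odd (l j) then (if Even j then (l j - 1) / 2 else (l j + 1) / 2)
  else
    if Odd (runStart l j) then l j / 2
    else if Even (j - runStart l j) then l j / 2 - 1 else l j / 2 + 1

/-- First component of the special closure `(ρ;σ)°`. -/
def scRho (ρ σ : ℕ → ℕ) : ℕ → ℕ
  | 0 => if ρ 0 + 1 < σ 0 then (ρ 0 + σ 0) / 2 else ρ 0
  | (i + 1) =>
      if ρ (i + 1) + 1 < σ (i + 1) then (ρ (i + 1) + σ (i + 1)) / 2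
      else if σ i < ρ (i + 1) then (σ i + ρ (i + 1)) / 2
      else ρ (i + 1)

/-- Second component of the special closure `(ρ;σ)°`. -/
def scSigma (ρ σ : ℕ → ℕ) (i : ℕ) : ℕ :=
  if ρ i + 1 < σ i then (ρ i + σ i + 1) / 2
  else if σ i < ρ (i + 1) then (σ i + ρ (i + 1) + 1) / 2
  else σ i

/-- First component of the closure `(ρ;σ)~` into `Q_n^{B,2}`. -/
def tRho (ρ σ : ℕ → ℕ) (i : ℕ) : ℕ :=
  if ρ i + 2 < σ i then (ρ i + σ i + 1) / 2 - 1 else ρ i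

/-- Second component of the closure `(ρ;σ)~` into `Q_n^{B,2}`. -/
def tSigma (ρ σ : ℕ → ℕ) (i : ℕ) : ℕ :=
  if ρ i + 2 < σ i then (ρ i + σ i) / 2 + 1 else σ i

/-- First component of the closure `(ρ;σ)^B` into `Q_n^B`. -/
def bRho (ρ σ : ℕ → ℕ) : ℕ → ℕ
  | 0 => if ρ 0 + 2 < σ 0 then (ρ 0 + σ 0 + 1) / 2 - 1 else ρ 0
  | (i + 1) =>
      if ρ (i + 1) + 2 < σ (i + 1) then (ρ (i + 1) + σ (i + 1) + 1) / 2 - 1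
      else if σ i < ρ (i + 1) then (σ i + ρ (i + 1)) / 2
      else ρ (i + 1)

/-- Second component of the closure `(ρ;σ)^B` into `Q_n^B`. -/
def bSigma (ρ σ : ℕ → ℕ) (i : ℕ) : ℕ :=
  if ρ i + 2 < σ i then (ρ i + σ i) / 2 + 1
  else if σ i < ρ (i + 1) then (σ i + ρ (i + 1) + 1) / 2
  else σ i

/-- First component of the closure `(ρ;σ)^C` into `Q_n^C`. -/
def cRho (ρ σ : ℕ → ℕ) : ℕ → ℕ
  | 0 => if ρ 0 + 1 < σ 0 then (ρ 0 + σ 0) / 2 else ρ 0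
  | (i + 1) =>
      if ρ (i + 1) + 1 < σ (i + 1) then (ρ (i + 1) + σ (i + 1)) / 2
      else if σ i + 1 < ρ (i + 1) then (σ i + ρ (i + 1) + 1) / 2
      else ρ (i + 1)

/-- Second component of the closure `(ρ;σ)^C` into `Q_n^C`. -/
def cSigma (ρ σ : ℕ → ℕ) (i : ℕ) : ℕ :=
  if ρ i + 1 < σ i then (ρ i + σ i + 1) / 2
  else if σ i + 1 < ρ (i + 1) then (σ i + ρ (i + 1)) / 2
  else σ i
lemma psum_succ (π : ℕ → ℕ) (k : ℕ) : psum π (k + 1) = psum π k + π k :=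
  Finset.sum_range_succ π k

/-- For an antitone sequence, `runStart l i` equals the least index whose
value is `≤ l i`. -/
lemma runStart_spec (l : ℕ → ℕ) (hA : Antitone l) (i : ℕ) :
    runStart l i = sInf {j | l j ≤ l i} := by
  have hne : {j | l j ≤ l i}.Nonempty := ⟨i, by simp⟩
  have hmem : sInf {j | l j ≤ l i} ∈ {j | l j ≤ l i} := Nat.sInf_mem hne
  have hset : {j | l i < l j} = Set.Iio (sInf {j | l j ≤ l i}) := by
    ext j
    simp only [Set.mem_setOf_eq, Set.mem_Iio]
    constructor
    · intro hj
      by_contra h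
      push_neg at h
      have := hA h
      simp only [Set.mem_setOf_eq] at hmem
      omega
    · intro hj
      have hnot : j ∉ {j | l j ≤ l i} := Nat.notMem_of_lt_sInf hj
      simp only [Set.mem_setOf_eq] at hnot
      omega
  rw [runStart, hset, ← Finset.coe_range, Set.ncard_coe_finset, Finset.card_range]

lemma runStart_le (l : ℕ → ℕ) (hA : Antitone l) (i : ℕ) : runStart l i ≤ i := by
  rw [runStart_spec l hA i]
  exact Nat.sInf_le (by simp)

lemma runStart_val (l : ℕ → ℕ) (hA : Antitone l) (i j : ℕ)
    (h1 : runStart l i ≤ j) (h2 : j ≤ i) : l j = l i := by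
  rw [runStart_spec l hA i] at h1
  have hne : {j | l j ≤ l i}.Nonempty := ⟨i, by simp⟩
  have hmem : sInf {j | l j ≤ l i} ∈ {j | l j ≤ l i} := Nat.sInf_mem hne
  simp only [Set.mem_setOf_eq] at hmem
  have h3 := hA h1
  have h4 := hA h2
  omega

lemma lt_of_lt_runStart (l : ℕ → ℕ) (hA : Antitone l) (i j : ℕ)
    (h : j < runStart l i) : l i < l j := by
  rw [runStart_spec l hA i] at h
  have hnot : j ∉ {j | l j ≤ l i} := Nat.notMem_of_lt_sInf h
  simp only [Set.mem_setOf_eq] at hnot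
  omega

lemma runStart_eq_of_lt (l : ℕ → ℕ) (hA : Antitone l) (k : ℕ)
    (h : l (k + 1) < l k) : runStart l (k + 1) = k + 1 := by
  rw [runStart_spec l hA (k + 1)]
  apply le_antisymm
  · exact Nat.sInf_le (by simp)
  · by_contra hc
    push_neg at hc
    have hmem : sInf {j | l j ≤ l (k + 1)} ∈ {j | l j ≤ l (k + 1)} :=
      Nat.sInf_mem ⟨k + 1, by simp⟩
    simp only [Set.mem_setOf_eq] at hmem
    have : l k ≤ l (sInf {j | l j ≤ l (k + 1)}) := hA (by omega)
    omega

/-- Parity of partial sums of a `P^C` partition. -/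
lemma psum_parity (n : ℕ) (l : ℕ → ℕ) (h : IsPC n l) (k : ℕ) :
    psum l k % 2 = ((k - runStart l k) * l k) % 2 := by
  have hA : Antitone l := antitone_nat_of_succ_le h.1
  induction k with
  | zero =>
    have h0 : runStart l 0 = 0 := Nat.le_antisymm (runStart_le l hA 0) (Nat.zero_le _)
    simp [psum, h0]
  | succ k ih =>
    rw [psum_succ]
    have hle : l (k + 1) ≤ l k := h.1 k
    have hs := runStart_le l hA k
    rcases eq_or_lt_of_le hle with heq | hlt
    · -- run continues
      have hrs : runStart l (k + 1) = runStart l k := by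
        unfold runStart; rw [heq]
      set s := runStart l k with hsdef
      have hmul : (k + 1 - s) * l (k + 1) = (k - s) * l k + l k := by
        rw [heq]
        have : k + 1 - s = (k - s) + 1 := by omega
        rw [this, Nat.succ_mul]
      rw [hrs, hmul]
      omega
    · -- run ends at k
      have hrs : runStart l (k + 1) = k + 1 := runStart_eq_of_lt l hA k hlt
      rw [hrs]
      simp only [Nat.sub_self, Nat.zero_mul, Nat.zero_mod]
      set s := runStart l k with hsdef
      rcases Nat.even_or_odd (l k) with hev | hodd
      · have h2 : l k % 2 = 0 := Nat.even_iff.mp hev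
        have hm : ((k - s) * l k) % 2 = 0 := by
          rw [Nat.mul_mod, h2]; simp
        omega
      · -- run of the odd value l k is exactly Ico s (k+1), of even length
        have hset : {i | l i = l k} = Set.Ico s (k + 1) := by
          ext j
          simp only [Set.mem_setOf_eq, Set.mem_Ico]
          constructor
          · intro hj
            constructor
            · by_contra hc
              push_neg at hc
              have := lt_of_lt_runStart l hA k j hc
              omega
            · by_contra hc
              push_neg at hc
              have := hA (show k + 1 ≤ j by omega)
              omega
          · intro ⟨h1, h2⟩
            exact runStart_val l hA k j h1 (by omega)
        have hcard : {i | l i = l k}.ncard = k + 1 - s := by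
          rw [hset, ← Finset.coe_Ico, Set.ncard_coe_finset, Nat.card_Ico]
        have heven := h.2.2 (l k) hodd
        rw [hcard] at heven
        have h2 : (k + 1 - s) % 2 = 0 := Nat.even_iff.mp heven
        have h3 : l k % 2 = 1 := Nat.odd_iff.mp hodd
        have h5 : (k - s) % 2 = 1 := by omega
        have hm : ((k - s) * l k) % 2 = 1 := by
          rw [Nat.mul_mod, h5, h3]
        omega

/-- Partial sums of `hphiC l` are the floors of half the partial sums of `l`. -/
lemma psum_hphiC (n : ℕ) (l : ℕ → ℕ) (h : IsPC n l) (k : ℕ) :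
    psum (hphiC l) k = psum l k / 2 := by
  have hA : Antitone l := antitone_nat_of_succ_le h.1
  induction k with
  | zero => simp [psum]
  | succ k ih =>
    rw [psum_succ, psum_succ, ih]
    have hpar := psum_parity n l h k
    have hs := runStart_le l hA k
    set s := runStart l k with hsdef
    rcases Nat.even_or_odd (l k) with hev | hodd
    · have hval : hphiC l k = l k / 2 := by
        unfold hphiC
        rw [if_pos hev]
      rw [hval]
      have h2 : l k % 2 = 0 := Nat.even_iff.mp hev
      omega
    · have h3 : l k % 2 = 1 := Nat.odd_iff.mp hodd
      have hne : ¬ Even (l k) := Nat.not_even_iff_odd.mpr hodd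
      rcases Nat.even_or_odd (k - s) with hoff | hoff
      · have hval : hphiC l k = l k / 2 := by
          unfold hphiC
          rw [if_neg hne, if_pos (by rw [← hsdef]; exact hoff)]
        rw [hval]
        have h4 : (k - s) % 2 = 0 := Nat.even_iff.mp hoff
        have hm : ((k - s) * l k) % 2 = 0 := by
          rw [Nat.mul_mod, h4]; simp
        omega
      · have hval : hphiC l k = l k / 2 + 1 := by
          unfold hphiC
          rw [if_neg hne, if_neg (by rw [← hsdef]; exact Nat.not_even_iff_odd.mpr hoff)]
        rw [hval]
        have h4 : (k - s) % 2 = 1 := Nat.odd_iff.mp hoff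
        have hm : ((k - s) * l k) % 2 = 1 := by
          rw [Nat.mul_mod, h4, h3]
        omega

lemma interleave_halves (f : ℕ → ℕ) :
    interleave (fun j => f (2 * j)) (fun j => f (2 * j + 1)) = f := by
  funext i
  unfold interleave
  by_cases h : i % 2 = 0
  · rw [if_pos h]
    show f (2 * (i / 2)) = f i
    congr 1
    omega
  · rw [if_neg h]
    show f (2 * (i / 2) + 1) = f i
    congr 1
    omega

/-- `Φ̂^C : P^C_{2n} → Q_n^C` is monotone. -/
theorem hphiC_monotone (n : ℕ) (π l : ℕ → ℕ)
    (hπ : IsPC n π) (hl : IsPC n l) (hle : Dominates l π) :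
    BiLE (fun j => hphiC π (2 * j)) (fun j => hphiC π (2 * j + 1))
      (fun j => hphiC l (2 * j)) (fun j => hphiC l (2 * j + 1)) := by
  unfold BiLE
  rw [interleave_halves (hphiC π), interleave_halves (hphiC l)]
  intro k
  rw [psum_hphiC n π hπ k, psum_hphiC n l hl k]
  exact Nat.div_le_div_right (hle k)
end

section
/- The posets Q_n^C (C-distinguished bipartitions of n with interleaved dominance order) and P^C_{2n} (partitions of 2n with all odd parts of even multiplicity, dominance order) are isomorphic via the mutually inverse order-preserving maps Φ^C (restricted to Q_n^C) and Φ̂^C. -/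
open Finset

section Aux

lemma interleave_even' (ρ σ : ℕ → ℕ) (j : ℕ) : interleave ρ σ (2 * j) = ρ j := by
  have h1 : (2 * j) % 2 = 0 := by omega
  have h2 : (2 * j) / 2 = j := by omega
  simp [interleave, h1, h2]

lemma interleave_odd' (ρ σ : ℕ → ℕ) (j : ℕ) : interleave ρ σ (2 * j + 1) = σ j := by
  have h1 : (2 * j + 1) % 2 = 1 := by omega
  have h2 : (2 * j + 1) / 2 = j := by omega
  simp [interleave, h1, h2]

/-- step condition for the interleaving of a QC bipartition -/
lemma step_of_QC {ρ σ : ℕ → ℕ} (hq : QC ρ σ) (i : ℕ) :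
    interleave ρ σ (i + 1) ≤ interleave ρ σ i + 1 := by
  rcases Nat.even_or_odd i with ⟨j, hj⟩ | ⟨j, hj⟩
  · subst hj
    have := (hq j).1
    rw [show j + j = 2 * j by ring, show 2 * j + 1 = 2 * j + 1 from rfl,
      interleave_even', interleave_odd']
    exact this
  · subst hj
    have := (hq j).2
    rw [show 2 * j + 1 + 1 = 2 * (j + 1) by ring, interleave_even', interleave_odd']
    exact this

/-- quasi-partition condition for the interleaving of a bipartition -/
lemma quasi_of_parts {ρ σ : ℕ → ℕ} (hρ : IsPartition ρ) (hσ : IsPartition σ) (i : ℕ) :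
    interleave ρ σ (i + 2) ≤ interleave ρ σ i := by
  rcases Nat.even_or_odd i with ⟨j, hj⟩ | ⟨j, hj⟩
  · subst hj
    rw [show j + j = 2 * j by ring, show 2 * j + 2 = 2 * (j + 1) by ring,
      interleave_even', interleave_even']
    exact hρ j
  · subst hj
    rw [show 2 * j + 1 + 2 = 2 * (j + 1) + 1 by ring, interleave_odd', interleave_odd']
    exact hσ j

lemma phiC_eq0 {π : ℕ → ℕ} (hs : ∀ i, π (i + 1) ≤ π i + 1) :
    phiC (fun i => 2 * π i) 0 = if π 0 < π 1 then 2 * π 0 + 1 else 2 * π 0 := by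
  have h : π 1 ≤ π 0 + 1 := hs 0
  simp only [phiC]
  split_ifs with h1 h2 h2 <;> omega

lemma phiC_eqS {π : ℕ → ℕ} (hs : ∀ i, π (i + 1) ≤ π i + 1) (j : ℕ) :
    phiC (fun i => 2 * π i) (j + 1) =
      if π (j + 1) < π (j + 2) then 2 * π (j + 1) + 1
      else if π j < π (j + 1) then 2 * π j + 1
      else 2 * π (j + 1) := by
  have h1 : π (j + 1) ≤ π j + 1 := hs j
  have h2 : π (j + 2) ≤ π (j + 1) + 1 := hs (j + 1)
  simp only [phiC]
  split_ifs with a b c d e f <;> omega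

end Aux
section Aux2

variable {π : ℕ → ℕ}

/-- `Φ^C` of a quasi-partition with steps ≤ 1 is weakly decreasing. -/
lemma phiC_partition (hs : ∀ i, π (i + 1) ≤ π i + 1) (hq : ∀ i, π (i + 2) ≤ π i) :
    IsPartition (phiC (fun i => 2 * π i)) := by
  intro i
  cases i with
  | zero =>
    rw [phiC_eq0 hs, phiC_eqS hs 0]
    simp only [show (0:ℕ)+1=1 from rfl, show (0:ℕ)+2=2 from rfl]
    have h1 : π 1 ≤ π 0 + 1 := hs 0
    have h2 : π 2 ≤ π 1 + 1 := hs 1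
    have h3 : π 2 ≤ π 0 := hq 0
    split_ifs <;> omega
  | succ j =>
    rw [phiC_eqS hs j, phiC_eqS hs (j + 1)]
    have h1 : π (j + 1) ≤ π j + 1 := hs j
    have h2 : π (j + 2) ≤ π (j + 1) + 1 := hs (j + 1)
    have h25 : π (j + 3) ≤ π (j + 2) + 1 := hs (j + 2)
    have h3 : π (j + 2) ≤ π j := hq j
    have h4 : π (j + 3) ≤ π (j + 1) := hq (j + 1)
    have e1 : π (j + 1 + 1) = π (j + 2) := rfl
    have e2 : π (j + 1 + 2) = π (j + 3) := rfl
    rw [e1, e2]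
    split_ifs <;> omega

/-- prefix sums under `Φ^C`. -/
lemma psum_phiC (hs : ∀ i, π (i + 1) ≤ π i + 1) (hq : ∀ i, π (i + 2) ≤ π i) (k : ℕ) :
    psum (phiC (fun i => 2 * π i)) (k + 1) =
      2 * psum π (k + 1) + (if π k < π (k + 1) then 1 else 0) := by
  induction k with
  | zero =>
    have h1 : π 1 ≤ π 0 + 1 := hs 0
    simp only [psum, Nat.zero_add, Finset.sum_range_one]
    rw [phiC_eq0 hs]
    split_ifs <;> omega
  | succ k ih =>
    simp only [show k+1+1=k+2 from rfl]
    rw [psum_succ, ih, psum_succ π (k+1), phiC_eqS hs k]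
    have h1 : π (k + 1) ≤ π k + 1 := hs k
    have h2 : π (k + 2) ≤ π (k + 1) + 1 := hs (k + 1)
    have h3 : π (k + 2) ≤ π k := hq k
    split_ifs <;> omega

/-- tail of `Φ^C` vanishes where `π` does -/
lemma phiC_zero (hs : ∀ i, π (i + 1) ≤ π i + 1) {N : ℕ} (hN : ∀ i, N ≤ i → π i = 0)
    {i : ℕ} (hi : N ≤ i) : phiC (fun j => 2 * π j) i = 0 := by
  cases i with
  | zero =>
    rw [phiC_eq0 hs]
    have h0 : π 0 = 0 := hN 0 hi
    have h1 : π 1 = 0 := hN 1 (by omega)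
    split_ifs <;> omega
  | succ j =>
    rw [phiC_eqS hs j]
    have h0 : π (j + 1) = 0 := hN _ hi
    have h1 : π (j + 2) = 0 := hN _ (by omega)
    split_ifs with a b
    · omega
    · omega
    · omega

/-- The run of equal values in an antitone sequence. -/
lemma runStart_eq_of {l : ℕ → ℕ} (hl : IsPartition l) {s i : ℕ} (hsi : s ≤ i)
    (hv : l s = l i) (hm : ∀ j, j < s → l i < l j) : runStart l i = s := by
  have hanti : ∀ {a b : ℕ}, a ≤ b → l b ≤ l a := fun {a b} h =>
    antitone_nat_of_succ_le hl h
  have hset : {j | l i < l j} = ↑(Finset.range s) := by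
    ext j
    simp only [Set.mem_setOf_eq, Finset.coe_range, Set.mem_Iio]
    constructor
    · intro h
      by_contra hns
      push_neg at hns
      have := hanti hns
      omega
    · exact hm j
  rw [runStart, hset, Set.ncard_coe_finset, Finset.card_range]

/-- Run bundle: for an antitone sequence and an index whose value is eventually
exceeded below, produce the run interval. -/
lemma run_bundle {l : ℕ → ℕ} (hl : IsPartition l) (i : ℕ) (hex : ∃ j, l j < l i) :
    ∃ s e : ℕ, runStart l i = s ∧ s ≤ i ∧ i < e ∧
      (∀ j, s ≤ j → j < e → l j = l i) ∧
      (∀ j, l j = l i → s ≤ j ∧ j < e) ∧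
      {j | l j = l i}.ncard = e - s := by
  have hanti : ∀ {a b : ℕ}, a ≤ b → l b ≤ l a := fun {a b} h =>
    antitone_nat_of_succ_le hl h
  have hexs : ∃ j, l j = l i := ⟨i, rfl⟩
  set s := Nat.find hexs with hs
  set e := Nat.find hex with he
  have hls : l s = l i := Nat.find_spec hexs
  have hsmin : ∀ j, j < s → l j ≠ l i := fun j hj => Nat.find_min hexs hj
  have hle : l e < l i := Nat.find_spec hex
  have hemin : ∀ j, j < e → ¬ l j < l i := fun j hj => Nat.find_min hex hj
  have hsi : s ≤ i := Nat.find_min' hexs rfl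
  have hie : i < e := by
    by_contra h
    push_neg at h
    have := hanti h
    omega
  have hrun : ∀ j, s ≤ j → j < e → l j = l i := by
    intro j h1 h2
    have := hanti h1
    have := hemin j h2
    omega
  have hmem : ∀ j, l j = l i → s ≤ j ∧ j < e := by
    intro j hj
    constructor
    · exact Nat.find_min' hexs hj
    · by_contra h
      push_neg at h
      have := hanti h
      omega
  refine ⟨s, e, ?_, hsi, hie, hrun, hmem, ?_⟩
  · exact runStart_eq_of hl hsi hls (fun j hj => by
      have := hanti (le_trans (le_of_lt hj) hsi)
      have := hsmin j hj
      omega)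
  · have : {j | l j = l i} = ↑(Finset.Ico s e) := by
      ext j
      simp only [Set.mem_setOf_eq, Finset.coe_Ico, Set.mem_Ico]
      exact ⟨fun h => hmem j h, fun h => hrun j h.1 h.2⟩
    rw [this, Set.ncard_coe_finset, Nat.card_Ico]

end Aux2
section Aux3

variable {π : ℕ → ℕ}

/-- no two consecutive ascents -/
lemma no_adj_asc (hq : ∀ i, π (i + 2) ≤ π i) (i : ℕ) :
    ¬(π i < π (i + 1) ∧ π (i + 1) < π (i + 2)) := by
  have := hq i
  omega

/-- the value of `Φ^C` at an ascent and just after an ascent -/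
lemma phiC_asc_pair (hs : ∀ i, π (i + 1) ≤ π i + 1) (hq : ∀ i, π (i + 2) ≤ π i)
    {j : ℕ} (hA : π j < π (j + 1)) :
    phiC (fun i => 2 * π i) j = 2 * π j + 1 ∧
      phiC (fun i => 2 * π i) (j + 1) = 2 * π j + 1 := by
  have hiso := no_adj_asc hq j
  constructor
  · cases j with
    | zero => rw [phiC_eq0 hs]; simp only [if_pos hA]
    | succ t =>
      have hA' : π (t + 1) < π (t + 2) := hA
      rw [phiC_eqS hs t, if_pos hA']
  · rw [phiC_eqS hs j]
    rw [if_neg (by have := hq j; omega), if_pos hA]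

/-- `Φ^C` value is `2 π i` away from ascents -/
lemma phiC_flat (hs : ∀ i, π (i + 1) ≤ π i + 1)
    {i : ℕ} (h1 : ¬ π i < π (i + 1)) (h2 : ∀ j, i = j + 1 → ¬ π j < π (j + 1)) :
    phiC (fun j => 2 * π j) i = 2 * π i := by
  cases i with
  | zero => rw [phiC_eq0 hs, if_neg h1]
  | succ t => rw [phiC_eqS hs t, if_neg h1, if_neg (h2 t rfl)]

/-- alternation along a run of an odd value of `Φ^C` -/
lemma phiC_alt (hs : ∀ i, π (i + 1) ≤ π i + 1) (hq : ∀ i, π (i + 2) ≤ π i)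
    {s e : ℕ}
    (hrun : ∀ j, s ≤ j → j < e → phiC (fun i => 2 * π i) j = phiC (fun i => 2 * π i) s)
    (hse : s < e)
    (hodd : ¬ Even (phiC (fun i => 2 * π i) s))
    (hsmin : ∀ j, j < s → phiC (fun i => 2 * π i) j ≠ phiC (fun i => 2 * π i) s) :
    ∀ m, s + m < e → (π (s + m) < π (s + m + 1) ↔ Even m) := by
  have base : π s < π (s + 1) := by
    by_contra hA
    cases s with
    | zero =>
      rw [phiC_eq0 hs, if_neg hA] at hodd
      exact hodd ⟨π 0, by ring⟩
    | succ t =>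
      rw [phiC_eqS hs t] at hodd
      by_cases hB : π t < π (t + 1)
      · rw [if_neg hA, if_pos hB] at hodd
        have h1 := (phiC_asc_pair hs hq hB).1
        have h2 := (phiC_asc_pair hs hq hB).2
        have := hsmin t (Nat.lt_succ_self t)
        rw [h1, h2] at this
        exact this rfl
      · rw [if_neg hA, if_neg hB] at hodd
        exact hodd ⟨π (t + 1), by ring⟩
  intro m
  induction m with
  | zero =>
    intro _
    simpa using base
  | succ m ih =>
    intro hm
    rw [show s + (m + 1) = s + m + 1 from by omega,
      show s + m + 1 + 1 = s + m + 2 from rfl, Nat.even_add_one]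
    have hm' : s + m < e := by omega
    have ihm := ih hm'
    have hv := hrun (s + m + 1) (by omega) (by omega)
    have hvodd : ¬ Even (phiC (fun i => 2 * π i) (s + m + 1)) := by rw [hv]; exact hodd
    have hiso := no_adj_asc hq (s + m)
    by_cases hA : π (s + m) < π (s + m + 1)
    · have hmE : Even m := ihm.mp hA
      constructor
      · intro h
        exact absurd ⟨hA, h⟩ hiso
      · intro h
        exact absurd hmE h
    · constructor
      · intro _ h
        exact hA (ihm.mpr h)
      · intro hnm
        by_contra hA'
        apply hvodd
        rw [phiC_flat hs hA' (fun j hj => by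
          rw [show j = s + m from by omega]; exact hA)]
        exact ⟨π (s + m + 1), by ring⟩
end Aux3
section Aux4

variable {π : ℕ → ℕ}

/-- odd parts of `Φ^C` have even multiplicity -/
lemma phiC_mult (hs : ∀ i, π (i + 1) ≤ π i + 1) (hq : ∀ i, π (i + 2) ≤ π i)
    {N : ℕ} (hN : ∀ i, N ≤ i → π i = 0) {a : ℕ} (ha : Odd a) :
    Even ({i | phiC (fun j => 2 * π j) i = a}.ncard) := by
  rcases Set.eq_empty_or_nonempty {i | phiC (fun j => 2 * π j) i = a} with hS | ⟨i, hi⟩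
  · rw [hS, Set.ncard_empty]
    exact Even.zero
  simp only [Set.mem_setOf_eq] at hi
  have hl := phiC_partition hs hq
  have hapos : 0 < a := ha.pos
  have hex : ∃ j, phiC (fun i => 2 * π i) j < phiC (fun i => 2 * π i) i := by
    refine ⟨N, ?_⟩
    rw [phiC_zero hs hN le_rfl, hi]
    exact hapos
  obtain ⟨s, e, hrs, hsi, hie, hrun, hmem, hcard⟩ := run_bundle hl i hex
  have hls : phiC (fun j => 2 * π j) s = phiC (fun j => 2 * π j) i :=
    hrun s le_rfl (lt_of_le_of_lt hsi hie)
  have hrun' : ∀ j, s ≤ j → j < e →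
      phiC (fun k => 2 * π k) j = phiC (fun k => 2 * π k) s := by
    intro j h1 h2
    rw [hrun j h1 h2, hls]
  have hodd : ¬ Even (phiC (fun j => 2 * π j) s) := by
    rw [hls, hi, Nat.even_iff]
    rw [Nat.odd_iff] at ha
    omega
  have hsmin : ∀ j, j < s → phiC (fun k => 2 * π k) j ≠ phiC (fun k => 2 * π k) s := by
    intro j hj hcontra
    rw [hls] at hcontra
    have := (hmem j hcontra).1
    omega
  have halt := phiC_alt hs hq hrun' (lt_of_le_of_lt hsi hie) hodd hsmin
  have hlast : ¬ π (e - 1) < π (e - 1 + 1) := by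
    intro hA
    have hpair := (phiC_asc_pair hs hq hA).2
    rw [show e - 1 + 1 = e from by omega] at hpair
    have h1 := (phiC_asc_pair hs hq hA).1
    have h2 : phiC (fun k => 2 * π k) (e - 1) = phiC (fun k => 2 * π k) i :=
      hrun _ (by omega) (by omega)
    have := (hmem e (by rw [hpair, ← h1, h2])).2
    omega
  have hm := halt (e - 1 - s) (by omega)
  rw [show s + (e - 1 - s) = e - 1 from by omega] at hm
  have : ¬ Even (e - 1 - s) := fun h => hlast (hm.mpr h)
  rw [← hi, hcard]
  rw [Nat.even_iff] at this ⊢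
  omega

/-- `Φ̂^C ∘ Φ^C = id` -/
lemma hphiC_phiC (hs : ∀ i, π (i + 1) ≤ π i + 1) (hq : ∀ i, π (i + 2) ≤ π i)
    {N : ℕ} (hN : ∀ i, N ≤ i → π i = 0) (i : ℕ) :
    hphiC (phiC (fun j => 2 * π j)) i = π i := by
  have hl := phiC_partition hs hq
  by_cases hE : Even (phiC (fun j => 2 * π j) i)
  · rw [hphiC, if_pos hE]
    have hflat : phiC (fun j => 2 * π j) i = 2 * π i := by
      by_cases hA : π i < π (i + 1)
      · exfalso
        rw [(phiC_asc_pair hs hq hA).1, Nat.even_iff] at hE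
        omega
      · refine phiC_flat hs hA ?_
        intro j hj hAj
        have h2 := (phiC_asc_pair hs hq hAj).2
        rw [← hj] at h2
        rw [h2, Nat.even_iff] at hE
        omega
    rw [hflat]
    omega
  · have hex : ∃ j, phiC (fun k => 2 * π k) j < phiC (fun k => 2 * π k) i := by
      refine ⟨N, ?_⟩
      rw [phiC_zero hs hN le_rfl]
      rw [Nat.even_iff] at hE
      omega
    obtain ⟨s, e, hrs, hsi, hie, hrun, hmem, hcard⟩ := run_bundle hl i hex
    have hls : phiC (fun j => 2 * π j) s = phiC (fun j => 2 * π j) i :=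
      hrun s le_rfl (lt_of_le_of_lt hsi hie)
    have hrun' : ∀ j, s ≤ j → j < e →
        phiC (fun k => 2 * π k) j = phiC (fun k => 2 * π k) s := by
      intro j h1 h2
      rw [hrun j h1 h2, hls]
    have hodd : ¬ Even (phiC (fun j => 2 * π j) s) := by rw [hls]; exact hE
    have hsmin : ∀ j, j < s → phiC (fun k => 2 * π k) j ≠ phiC (fun k => 2 * π k) s := by
      intro j hj hcontra
      rw [hls] at hcontra
      have := (hmem j hcontra).1
      omega
    have halt := phiC_alt hs hq hrun' (lt_of_le_of_lt hsi hie) hodd hsmin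
    rw [hphiC, if_neg hE, hrs]
    by_cases hpar : Even (i - s)
    · rw [if_pos hpar]
      have hA : π i < π (i + 1) := by
        have := (halt (i - s) (by omega)).mpr hpar
        rwa [show s + (i - s) = i from by omega] at this
      rw [(phiC_asc_pair hs hq hA).1]
      omega
    · rw [if_neg hpar]
      have hs1 : s + 1 ≤ i := by
        rcases Nat.eq_or_lt_of_le hsi with h | h
        · exfalso; apply hpar; rw [← h]; simp
        · omega
      have hA : π (i - 1) < π (i - 1 + 1) := by
        have hpar' : Even (i - 1 - s) := by
          rw [Nat.even_iff] at hpar ⊢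
          omega
        have := (halt (i - 1 - s) (by omega)).mpr hpar'
        rwa [show s + (i - 1 - s) = i - 1 from by omega] at this
      have hpair := (phiC_asc_pair hs hq hA).2
      rw [show i - 1 + 1 = i from by omega] at hpair
      have hπ : π i = π (i - 1) + 1 := by
        have h1 := hs (i - 1)
        rw [show i - 1 + 1 = i from by omega] at h1 hA
        omega
      rw [hpair]
      omega

end Aux4
section Aux5

lemma hphiC_lb (l : ℕ → ℕ) (i : ℕ) : l i / 2 ≤ hphiC l i := by
  rw [hphiC]
  split_ifs <;> omega

lemma hphiC_ub (l : ℕ → ℕ) (i : ℕ) : hphiC l i ≤ l i / 2 + 1 := by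
  rw [hphiC]
  split_ifs <;> omega

lemma hphiC_even {l : ℕ → ℕ} {i : ℕ} (hE : Even (l i)) : hphiC l i = l i / 2 := by
  rw [hphiC, if_pos hE]

lemma hphiC_step {l : ℕ → ℕ} (hl : IsPartition l) (i : ℕ) :
    hphiC l (i + 1) ≤ hphiC l i + 1 := by
  have h1 := hphiC_lb l i
  have h2 := hphiC_ub l (i + 1)
  have h3 := hl i
  omega

/-- the run interval of an odd value, in a `P^C`-type partition -/
lemma odd_run {l : ℕ → ℕ} (hl : IsPartition l) {N : ℕ} (hN : ∀ i, N ≤ i → l i = 0)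
    (hmult : ∀ a : ℕ, Odd a → Even ({i | l i = a}.ncard))
    {i : ℕ} (hO : ¬ Even (l i)) :
    ∃ s e : ℕ, runStart l i = s ∧ s ≤ i ∧ i < e ∧
      (∀ j, s ≤ j → j < e → l j = l i) ∧
      (∀ j, l j = l i → s ≤ j ∧ j < e) ∧
      Even (e - s) ∧
      (∀ j, s ≤ j → j < e → runStart l j = s) := by
  have hanti : ∀ {a b : ℕ}, a ≤ b → l b ≤ l a := fun {a b} h =>
    antitone_nat_of_succ_le hl h
  have hex : ∃ j, l j < l i := by
    refine ⟨N, ?_⟩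
    rw [hN N le_rfl, Nat.even_iff] at *
    omega
  obtain ⟨s, e, hrs, hsi, hie, hrun, hmem, hcard⟩ := run_bundle hl i hex
  have heven : Even (e - s) := by
    have := hmult (l i) (by rw [Nat.odd_iff]; rw [Nat.even_iff] at hO; omega)
    rwa [hcard] at this
  refine ⟨s, e, hrs, hsi, hie, hrun, hmem, heven, ?_⟩
  intro j h1 h2
  refine runStart_eq_of hl h1 ?_ ?_
  · rw [hrun j h1 h2, hrun s le_rfl (by omega)]
  · intro x hx
    rw [hrun j h1 h2]
    have hxi : l i ≤ l x := hanti (by omega)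
    have : l x ≠ l i := fun hc => by have := (hmem x hc).1; omega
    omega

/-- a "low" position in an odd run is followed by a "high" one with the
same value -/
lemma low_pair {l : ℕ → ℕ} (hl : IsPartition l) {N : ℕ} (hN : ∀ i, N ≤ i → l i = 0)
    (hmult : ∀ a : ℕ, Odd a → Even ({i | l i = a}.ncard))
    {i : ℕ} (hO : ¬ Even (l i)) (hlow : Even (i - runStart l i)) :
    l (i + 1) = l i ∧ runStart l (i + 1) = runStart l i ∧
      ¬ Even (i + 1 - runStart l (i + 1)) ∧
      hphiC l i = l i / 2 ∧ hphiC l (i + 1) = l i / 2 + 1 := by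
  obtain ⟨s, e, hrs, hsi, hie, hrun, hmem, heven, hrc⟩ := odd_run hl hN hmult hO
  rw [hrs] at hlow
  have hi1e : i + 1 < e := by
    rw [Nat.even_iff] at hlow heven
    omega
  have hv : l (i + 1) = l i := hrun _ (by omega) hi1e
  have hrs1 : runStart l (i + 1) = s := hrc _ (by omega) hi1e
  have hO1 : ¬ Even (l (i + 1)) := by rw [hv]; exact hO
  have hhigh : ¬ Even (i + 1 - s) := by
    rw [Nat.even_iff] at hlow ⊢
    omega
  refine ⟨hv, by rw [hrs1, hrs], by rw [hrs1]; exact hhigh, ?_, ?_⟩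
  · rw [hphiC, if_neg hO, hrs, if_pos hlow]
  · rw [hphiC, if_neg hO1, hrs1, if_neg hhigh, hv]

lemma hphiC_high {l : ℕ → ℕ} {i : ℕ} (hO : ¬ Even (l i))
    (hhigh : ¬ Even (i - runStart l i)) : hphiC l i = l i / 2 + 1 := by
  rw [hphiC, if_neg hO, if_neg hhigh]

lemma hphiC_low {l : ℕ → ℕ} {i : ℕ} (hO : ¬ Even (l i))
    (hlow : Even (i - runStart l i)) : hphiC l i = l i / 2 := by
  rw [hphiC, if_neg hO, if_pos hlow]

/-- quasi-partition property of `Φ̂^C` -/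
lemma hphiC_quasi {l : ℕ → ℕ} (hl : IsPartition l) {N : ℕ} (hN : ∀ i, N ≤ i → l i = 0)
    (hmult : ∀ a : ℕ, Odd a → Even ({i | l i = a}.ncard)) (i : ℕ) :
    hphiC l (i + 2) ≤ hphiC l i := by
  have hanti : l (i + 2) ≤ l i := le_trans (hl (i + 1)) (hl i)
  by_cases hE : Even (l i)
  · rw [hphiC_even hE]
    have h2 := hphiC_ub l (i + 2)
    by_cases hE2 : Even (l (i + 2))
    · rw [hphiC_even hE2]
      omega
    · rw [Nat.even_iff] at hE hE2
      omega
  · obtain ⟨s, e, hrs, hsi, hie, hrun, hmem, heven, hrc⟩ := odd_run hl hN hmult hE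
    by_cases hsame : l (i + 2) = l i
    · have h2e : i + 2 < e := (hmem _ hsame).2
      have hrs2 : runStart l (i + 2) = s := hrc _ (by omega) h2e
      have hO2 : ¬ Even (l (i + 2)) := by rw [hsame]; exact hE
      have hpar : (Even (i + 2 - s)) ↔ (Even (i - s)) := by
        rw [Nat.even_iff, Nat.even_iff]
        omega
      by_cases hlow : Even (i - s)
      · have hl1 : Even (i - runStart l i) := by rw [hrs]; exact hlow
        have h1 : Even (i + 2 - runStart l (i + 2)) := by
          rw [hrs2]; exact hpar.mpr hlow
        rw [hphiC_low hE hl1, hphiC_low hO2 h1, hsame]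
      · have hl1 : ¬Even (i - runStart l i) := by rw [hrs]; exact hlow
        have h1 : ¬Even (i + 2 - runStart l (i + 2)) := by
          rw [hrs2]; exact fun h => hlow (hpar.mp h)
        rw [hphiC_high hE hl1, hphiC_high hO2 h1, hsame]
    · have hlt : l (i + 2) < l i := lt_of_le_of_ne hanti hsame
      have h1 := hphiC_lb l i
      have h2 := hphiC_ub l (i + 2)
      by_cases hE2 : Even (l (i + 2))
      · rw [hphiC_even hE2]
        omega
      · rw [Nat.even_iff] at hE hE2
        omega

end Aux5
section Aux6

open Classical in
/-- prefix sums of `Φ̂^C` -/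
lemma psum_hphiC_s7 {l : ℕ → ℕ} (hl : IsPartition l) {N : ℕ} (hN : ∀ i, N ≤ i → l i = 0)
    (hmult : ∀ a : ℕ, Odd a → Even ({i | l i = a}.ncard)) (K : ℕ) :
    psum l K = 2 * psum (hphiC l) K +
      (if 0 < K ∧ ¬ Even (l (K - 1)) ∧ Even ((K - 1) - runStart l (K - 1))
        then 1 else 0) := by
  induction K with
  | zero => simp [psum]
  | succ K ih =>
    rw [psum_succ, psum_succ, ih, show K + 1 - 1 = K from rfl]
    by_cases hE : Even (l K)
    · have hδ : ¬ (0 < K ∧ ¬ Even (l (K - 1)) ∧ Even ((K - 1) - runStart l (K - 1))) := by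
        rintro ⟨hK, hO, hlow⟩
        have hp := (low_pair hl hN hmult hO hlow).1
        rw [show K - 1 + 1 = K from by omega] at hp
        rw [hp, Nat.even_iff] at hE
        rw [Nat.even_iff] at hO
        omega
      rw [if_neg hδ, if_neg (by rintro ⟨_, h, _⟩; exact h hE), hphiC_even hE]
      rw [Nat.even_iff] at hE
      omega
    · by_cases hlow : Even (K - runStart l K)
      · have hδ : ¬ (0 < K ∧ ¬ Even (l (K - 1)) ∧ Even ((K - 1) - runStart l (K - 1))) := by
          rintro ⟨hK, hO, hlow'⟩
          obtain ⟨hp, hrr, hh, -, -⟩ := low_pair hl hN hmult hO hlow'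
          rw [show K - 1 + 1 = K from by omega] at hp hrr hh
          exact hh hlow
        rw [if_neg hδ, if_pos ⟨Nat.succ_pos K, hE, hlow⟩, hphiC_low hE hlow]
        rw [Nat.even_iff] at hE
        omega
      · obtain ⟨s, e, hrs, hsi, hie, hrun, hmem, heven, hrc⟩ := odd_run hl hN hmult hE
        rw [hrs] at hlow
        have hK1 : s + 1 ≤ K := by
          rcases Nat.eq_or_lt_of_le hsi with h | h
          · exfalso; apply hlow; rw [← h]; simp
          · omega
        have hvK1 : l (K - 1) = l K := hrun _ (by omega) (by omega)
        have hrsK1 : runStart l (K - 1) = s := hrc _ (by omega) (by omega)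
        have hOK1 : ¬ Even (l (K - 1)) := by rwa [hvK1]
        have hlowK1 : Even ((K - 1) - runStart l (K - 1)) := by
          rw [hrsK1, Nat.even_iff]
          rw [Nat.even_iff] at hlow
          omega
        have hhigh : ¬ Even (K - runStart l K) := by rwa [hrs]
        rw [if_pos ⟨by omega, hOK1, hlowK1⟩,
          if_neg (by rintro ⟨-, -, h⟩; exact hhigh h), hphiC_high hE hhigh]
        rw [Nat.even_iff] at hE
        omega

/-- ascent characterization for `Φ̂^C` -/
lemma hphiC_ascent {l : ℕ → ℕ} (hl : IsPartition l) {N : ℕ} (hN : ∀ i, N ≤ i → l i = 0)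
    (hmult : ∀ a : ℕ, Odd a → Even ({i | l i = a}.ncard)) (i : ℕ) :
    hphiC l i < hphiC l (i + 1) ↔
      (¬ Even (l i) ∧ Even (i - runStart l i)) := by
  constructor
  · intro hA
    by_contra hc
    push_neg at hc
    apply Nat.not_le.mpr hA
    by_cases hE : Even (l i)
    · rw [hphiC_even hE]
      have h2 := hphiC_ub l (i + 1)
      have h3 := hl i
      by_cases hE1 : Even (l (i + 1))
      · rw [hphiC_even hE1]
        omega
      · rw [Nat.even_iff] at hE hE1
        omega
    · have hhigh : ¬ Even (i - runStart l i) := hc hE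
      rw [hphiC_high hE hhigh]
      obtain ⟨s, e, hrs, hsi, hie, hrun, hmem, heven, hrc⟩ := odd_run hl hN hmult hE
      by_cases hsame : l (i + 1) = l i
      · have h1e : i + 1 < e := (hmem _ hsame).2
        have hO1 : ¬ Even (l (i + 1)) := by rwa [hsame]
        have h2 := hphiC_ub l (i + 1)
        rw [hsame] at h2
        omega
      · have hlt : l (i + 1) < l i := lt_of_le_of_ne (hl i) hsame
        have h2 := hphiC_ub l (i + 1)
        by_cases hE1 : Even (l (i + 1))
        · rw [hphiC_even hE1]
          rw [Nat.even_iff] at hE hE1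
          omega
        · rw [Nat.even_iff] at hE hE1
          omega
  · rintro ⟨hO, hlow⟩
    obtain ⟨-, -, -, h1, h2⟩ := low_pair hl hN hmult hO hlow
    rw [h1, h2]
    omega

/-- `Φ^C ∘ Φ̂^C = id` -/
lemma phiC_hphiC {l : ℕ → ℕ} (hl : IsPartition l) {N : ℕ} (hN : ∀ i, N ≤ i → l i = 0)
    (hmult : ∀ a : ℕ, Odd a → Even ({i | l i = a}.ncard)) (i : ℕ) :
    phiC (fun j => 2 * hphiC l j) i = l i := by
  have hs : ∀ j, hphiC l (j + 1) ≤ hphiC l j + 1 := hphiC_step hl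
  have hasc := hphiC_ascent hl hN hmult
  have hflat : ∀ j, Even (l j) → ¬ hphiC l j < hphiC l (j + 1) := by
    intro j hE hA
    exact ((hasc j).mp hA).1 hE
  cases i with
  | zero =>
    rw [phiC_eq0 hs]
    by_cases hA : hphiC l 0 < hphiC l 1
    · rw [if_pos hA]
      obtain ⟨hO, hlow⟩ := (hasc 0).mp hA
      rw [hphiC_low hO hlow]
      rw [Nat.even_iff] at hO
      omega
    · rw [if_neg hA]
      by_cases hE : Even (l 0)
      · rw [hphiC_even hE]
        rw [Nat.even_iff] at hE
        omega
      · exfalso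
        apply hA
        refine (hasc 0).mpr ⟨hE, ?_⟩
        simp [Nat.zero_sub]
  | succ j =>
    rw [phiC_eqS hs j]
    by_cases hA1 : hphiC l (j + 1) < hphiC l (j + 2)
    · rw [if_pos hA1]
      obtain ⟨hO, hlow⟩ := (hasc (j + 1)).mp hA1
      rw [hphiC_low hO hlow]
      rw [Nat.even_iff] at hO
      omega
    · rw [if_neg hA1]
      by_cases hA0 : hphiC l j < hphiC l (j + 1)
      · rw [if_pos hA0]
        obtain ⟨hO, hlow⟩ := (hasc j).mp hA0
        obtain ⟨hv, -, -, h1, h2⟩ := low_pair hl hN hmult hO hlow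
        rw [h1, hv]
        rw [Nat.even_iff] at hO
        omega
      · rw [if_neg hA0]
        by_cases hE : Even (l (j + 1))
        · rw [hphiC_even hE]
          rw [Nat.even_iff] at hE
          omega
        · exfalso
          by_cases hlow : Even ((j + 1) - runStart l (j + 1))
          · exact hA1 ((hasc (j + 1)).mpr ⟨hE, hlow⟩)
          · obtain ⟨s, e, hrs, hsi, hie, hrun, hmem, heven, hrc⟩ :=
              odd_run hl hN hmult hE
            rw [hrs] at hlow
            have hj1 : s + 1 ≤ j + 1 := by
              rcases Nat.eq_or_lt_of_le hsi with h | h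
              · exfalso; apply hlow; rw [← h]; simp
              · omega
            have hsj : s ≤ j := by omega
            have hvj : l j = l (j + 1) := hrun _ hsj (by omega)
            have hrsj : runStart l j = s := hrc _ hsj (by omega)
            have hOj : ¬ Even (l j) := by rwa [hvj]
            have hlowj : Even (j - runStart l j) := by
              rw [hrsj, Nat.even_iff]
              rw [Nat.even_iff] at hlow
              omega
            exact hA0 ((hasc j).mpr ⟨hOj, hlowj⟩)

end Aux6
section Aux7

/-- `Φ^C` preserves and reflects dominance -/
lemma dom_phiC {π₁ π₂ : ℕ → ℕ}
    (hs1 : ∀ i, π₁ (i + 1) ≤ π₁ i + 1) (hq1 : ∀ i, π₁ (i + 2) ≤ π₁ i)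
    (hs2 : ∀ i, π₂ (i + 1) ≤ π₂ i + 1) (hq2 : ∀ i, π₂ (i + 2) ≤ π₂ i) :
    (∀ k, psum π₁ k ≤ psum π₂ k) ↔
      (∀ k, psum (phiC fun i => 2 * π₁ i) k ≤ psum (phiC fun i => 2 * π₂ i) k) := by
  constructor
  · intro h k
    cases k with
    | zero => simp [psum]
    | succ m =>
      rw [psum_phiC hs1 hq1 m, psum_phiC hs2 hq2 m]
      have d1 := h (m + 1)
      have d0 := h m
      have d2 := h (m + 2)
      have e1 : psum π₁ (m + 1) = psum π₁ m + π₁ m := psum_succ π₁ m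
      have e2 : psum π₂ (m + 1) = psum π₂ m + π₂ m := psum_succ π₂ m
      have e3 : psum π₁ (m + 2) = psum π₁ (m + 1) + π₁ (m + 1) := psum_succ π₁ (m + 1)
      have e4 : psum π₂ (m + 2) = psum π₂ (m + 1) + π₂ (m + 1) := psum_succ π₂ (m + 1)
      split_ifs <;> omega
  · intro h k
    cases k with
    | zero => simp [psum]
    | succ m =>
      have hm := h (m + 1)
      rw [psum_phiC hs1 hq1 m, psum_phiC hs2 hq2 m] at hm
      split_ifs at hm <;> omega

end Aux7

/-- STATEMENT 7 PROOF -/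
theorem QC_PC_order_iso' (n : ℕ) :
    (∀ ρ σ : ℕ → ℕ, IsBipartition n ρ σ → QC ρ σ → IsPC n (PhiC ρ σ)) ∧
    (∀ l : ℕ → ℕ, IsPC n l →
      IsBipartition n (fun j => hphiC l (2 * j)) (fun j => hphiC l (2 * j + 1)) ∧
      QC (fun j => hphiC l (2 * j)) (fun j => hphiC l (2 * j + 1))) ∧
    (∀ ρ σ : ℕ → ℕ, IsBipartition n ρ σ → QC ρ σ →
      ∀ i, hphiC (PhiC ρ σ) i = interleave ρ σ i) ∧
    (∀ l : ℕ → ℕ, IsPC n l →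
      ∀ i, PhiC (fun j => hphiC l (2 * j)) (fun j => hphiC l (2 * j + 1)) i = l i) ∧
    (∀ ρ σ μ ν : ℕ → ℕ, IsBipartition n ρ σ → QC ρ σ →
      IsBipartition n μ ν → QC μ ν →
      (BiLE ρ σ μ ν ↔ Dominates (PhiC μ ν) (PhiC ρ σ))) := by
  have hinterleq : ∀ l : ℕ → ℕ,
      interleave (fun j => hphiC l (2 * j)) (fun j => hphiC l (2 * j + 1)) = hphiC l := by
    intro l
    funext i
    rcases Nat.even_or_odd i with ⟨j, hj⟩ | ⟨j, hj⟩
    · subst hj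
      rw [show j + j = 2 * j from by ring, interleave_even']
    · subst hj
      rw [interleave_odd']
  refine ⟨?_, ?_, ?_, ?_, ?_⟩
  · -- Part 1
    intro ρ σ hb hqc
    obtain ⟨hρ, hσ, N, hN0, hNs⟩ := hb
    have hs := step_of_QC hqc
    have hq := quasi_of_parts hρ hσ
    refine ⟨phiC_partition hs hq, ⟨N, fun i hi => phiC_zero hs hN0 hi, ?_⟩,
      fun a ha => phiC_mult hs hq hN0 ha⟩
    show psum (phiC fun i => 2 * interleave ρ σ i) N = 2 * n
    cases N with
    | zero =>
      simp only [psum, Finset.range_zero, Finset.sum_empty] at hNs ⊢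
      omega
    | succ m =>
      rw [psum_phiC hs hq m, hNs, if_neg (by have := hN0 (m + 1) le_rfl; omega)]
      omega
  · -- Part 2
    intro l hpc
    obtain ⟨hl, ⟨N, hN0, hNs⟩, hmult⟩ := hpc
    have hq' := hphiC_quasi hl hN0 hmult
    have hs' := hphiC_step hl
    have hQC : QC (fun j => hphiC l (2 * j)) (fun j => hphiC l (2 * j + 1)) := by
      intro i
      constructor
      · exact hs' (2 * i)
      · show hphiC l (2 * (i + 1)) ≤ hphiC l (2 * i + 1) + 1
        rw [show 2 * (i + 1) = (2 * i + 1) + 1 from by ring]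
        exact hs' (2 * i + 1)
    refine ⟨⟨?_, ?_, ?_⟩, hQC⟩
    · intro j
      show hphiC l (2 * (j + 1)) ≤ hphiC l (2 * j)
      rw [show 2 * (j + 1) = 2 * j + 2 from by ring]
      exact hq' (2 * j)
    · intro j
      show hphiC l (2 * (j + 1) + 1) ≤ hphiC l (2 * j + 1)
      rw [show 2 * (j + 1) + 1 = (2 * j + 1) + 2 from by ring]
      exact hq' (2 * j + 1)
    · rw [hinterleq l]
      refine ⟨N, fun i hi => ?_, ?_⟩
      · rw [hphiC_even (by rw [hN0 i hi]; exact Even.zero), hN0 i hi]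
      · have hψ := psum_hphiC_s7 hl hN0 hmult N
        rw [if_neg ?_] at hψ
        · omega
        · rintro ⟨hK, hO, hlow⟩
          have hp := (low_pair hl hN0 hmult hO hlow).1
          rw [show N - 1 + 1 = N from by omega, hN0 N le_rfl] at hp
          rw [← hp] at hO
          exact hO Even.zero
  · -- Part 3
    intro ρ σ hb hqc i
    obtain ⟨hρ, hσ, N, hN0, -⟩ := hb
    exact hphiC_phiC (step_of_QC hqc) (quasi_of_parts hρ hσ) hN0 i
  · -- Part 4
    intro l hpc i
    obtain ⟨hl, ⟨N, hN0, hNs⟩, hmult⟩ := hpc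
    show phiC (fun j =>
      2 * interleave (fun j => hphiC l (2 * j)) (fun j => hphiC l (2 * j + 1)) j) i = l i
    rw [hinterleq l]
    exact phiC_hphiC hl hN0 hmult i
  · -- Part 5
    intro ρ σ μ ν hb1 hqc1 hb2 hqc2
    have hs1 := step_of_QC hqc1
    have hq1 := quasi_of_parts hb1.1 hb1.2.1
    have hs2 := step_of_QC hqc2
    have hq2 := quasi_of_parts hb2.1 hb2.2.1
    exact dom_phiC hs1 hq1 hs2 hq2
/-- the posets `Q_n^C` and `P^C_{2n}` are isomorphic via the
mutually inverse order-preserving maps `Φ^C` and `Φ̂^C`. -/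
theorem QC_PC_order_iso (n : ℕ) :
    (∀ ρ σ : ℕ → ℕ, IsBipartition n ρ σ → QC ρ σ → IsPC n (PhiC ρ σ)) ∧
    (∀ l : ℕ → ℕ, IsPC n l →
      IsBipartition n (fun j => hphiC l (2 * j)) (fun j => hphiC l (2 * j + 1)) ∧
      QC (fun j => hphiC l (2 * j)) (fun j => hphiC l (2 * j + 1))) ∧
    (∀ ρ σ : ℕ → ℕ, IsBipartition n ρ σ → QC ρ σ →
      ∀ i, hphiC (PhiC ρ σ) i = interleave ρ σ i) ∧
    (∀ l : ℕ → ℕ, IsPC n l →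
      ∀ i, PhiC (fun j => hphiC l (2 * j)) (fun j => hphiC l (2 * j + 1)) i = l i) ∧
    (∀ ρ σ μ ν : ℕ → ℕ, IsBipartition n ρ σ → QC ρ σ →
      IsBipartition n μ ν → QC μ ν →
      (BiLE ρ σ μ ν ↔ Dominates (PhiC μ ν) (PhiC ρ σ))) := by
  exact QC_PC_order_iso' n
end
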